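/- For X ⊆ B(n) and E the set of idempotents of B(n), X is a face of the subsemigroup complex H(B(n)) if and only if X \ E is a face of H(B(n)). -/

import Mathlib

/-- The aperiodic Brandt semigroup `B(n)` on `({1..n} × {1..n}) ∪ {0}`,
with `none` playing the role of the zero element. -/
abbrev B (n : ℕ) := Option (Fin n × Fin n)

/-- Multiplication in `B(n)`: `(i,j)(k,l) = (i,l)` if `j = k`, and `0` otherwise. -/
def bmul {n : ℕ} : B n → B n → B n
  | some (i, j), some (k, l) => if j = k then some (i, l) else none
  | _, _ => none

/-- A subset of `B(n)` is a subsemigroup if it is closed under multiplication. -/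
def IsSub {n : ℕ} (T : Set (B n)) : Prop :=
  ∀ x ∈ T, ∀ y ∈ T, bmul x y ∈ T

/-- The subsemigroup of `B(n)` generated by a subset. -/
def gen {n : ℕ} (X : Set (B n)) : Set (B n) :=
  ⋂₀ {T | IsSub T ∧ X ⊆ T}

/-- `X` is a face of the subsemigroup complex `H(B(n))`: it admits an enumeration
producing a strictly increasing chain of generated subsemigroups. -/
def IsFace {n : ℕ} (X : Set (B n)) : Prop :=
  ∃ l : List (B n), l.Nodup ∧ {x | x ∈ l} = X ∧
    ∀ (i : ℕ) (h : i < l.length), l.get ⟨i, h⟩ ∉ gen {x | x ∈ l.take i}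

/-- A facet is a maximal face. -/
def IsFacet {n : ℕ} (X : Set (B n)) : Prop :=
  IsFace X ∧ ∀ Y : Set (B n), IsFace Y → X ⊆ Y → X = Y

/-- Product `x * y₁ * ⋯ * y_k` in `B(n)`. -/
def bprod {n : ℕ} : B n → List (B n) → B n
  | x, [] => x
  | x, y :: l => bprod (bmul x y) l

/-- Closure under the inverse operation `(i,j) ↦ (j,i)`. -/
def InvClosed {n : ℕ} (T : Set (B n)) : Prop :=
  ∀ i j : Fin n, some (i, j) ∈ T → some (j, i) ∈ T

/-- A nilpotent subsemigroup of `B(n)` containing `0`: some power is `{0}`. -/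
def IsNilpSub {n : ℕ} (T : Set (B n)) : Prop :=
  IsSub T ∧ none ∈ T ∧ ∃ k : ℕ, 1 ≤ k ∧
    ∀ (x : B n) (l : List (B n)), x ∈ T → (∀ y ∈ l, y ∈ T) →
      l.length + 1 = k → bprod x l = none
namespace Aux

lemma gen_isSub {n : ℕ} (X : Set (B n)) : IsSub (gen X) := by
  intro x hx y hy T hT
  exact hT.1 x (hx T hT) y (hy T hT)

lemma subset_gen {n : ℕ} (X : Set (B n)) : X ⊆ gen X := by
  intro x hx T hT; exact hT.2 hx

lemma gen_le {n : ℕ} {X T : Set (B n)} (hT : IsSub T) (h : X ⊆ T) : gen X ⊆ T := by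
  intro x hx; exact hx T ⟨hT, h⟩

lemma gen_mono {n : ℕ} {X Y : Set (B n)} (h : X ⊆ Y) : gen X ⊆ gen Y :=
  gen_le (gen_isSub Y) (h.trans (subset_gen Y))

lemma gen_empty {n : ℕ} : gen (∅ : Set (B n)) = ∅ := by
  apply Set.eq_empty_of_subset_empty
  exact gen_le (by intro x hx; exact absurd hx (Set.notMem_empty x)) (by simp)

def Eset (n : ℕ) : Set (B n) := {none} ∪ {x | ∃ i : Fin n, x = some (i, i)}

lemma absorb_right {n : ℕ} (a : B n) {b : B n} (hb : b ∈ Eset n) :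
    bmul a b = a ∨ bmul a b = none := by
  rcases hb with hb | ⟨i, rfl⟩
  · simp only [Set.mem_singleton_iff] at hb; subst hb
    rcases a with _ | ⟨x, y⟩ <;> right <;> rfl
  · rcases a with _ | ⟨x, y⟩
    · right; rfl
    · by_cases h : y = i
      · left; subst h; simp [bmul]
      · right; simp [bmul, h]

lemma absorb_left {n : ℕ} {b : B n} (hb : b ∈ Eset n) (a : B n) :
    bmul b a = a ∨ bmul b a = none := by
  rcases hb with hb | ⟨i, rfl⟩
  · simp only [Set.mem_singleton_iff] at hb; subst hb; right; rfl
  · rcases a with _ | ⟨x, y⟩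
    · right; rfl
    · by_cases h : i = x
      · left; subst h; simp [bmul]
      · right; simp [bmul, h]

lemma gen_union_E {n : ℕ} {E₀ S : Set (B n)} (hE : E₀ ⊆ Eset n) :
    gen (E₀ ∪ S) ⊆ gen S ∪ E₀ ∪ {none} := by
  apply gen_le
  · intro x hx y hy
    rcases hy with (hy | hy) | hy
    · rcases hx with (hx | hx) | hx
      · exact Or.inl (Or.inl (gen_isSub S x hx y hy))
      · rcases absorb_left (hE hx) y with h | h
        · rw [h]; exact Or.inl (Or.inl hy)
        · rw [h]; exact Or.inr rfl
      · simp only [Set.mem_singleton_iff] at hx; subst hx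
        right; rcases y with _ | y <;> rfl
    · rcases absorb_right x (hE hy) with h | h
      · rw [h]; exact hx
      · rw [h]; exact Or.inr rfl
    · simp only [Set.mem_singleton_iff] at hy; subst hy
      right; rcases x with _ | x <;> rfl
  · intro x hx
    rcases hx with hx | hx
    · exact Or.inl (Or.inr hx)
    · exact Or.inl (Or.inl (subset_gen S hx))

lemma sublist_take {α : Type*} {l' l : List α} (h : l'.Sublist l) :
    ∀ (i : ℕ) (hi : i < l'.length), ∃ (j : ℕ) (hj : j < l.length),
      l.get ⟨j, hj⟩ = l'.get ⟨i, hi⟩ ∧ (l'.take i).Sublist (l.take j) := by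
  induction h with
  | slnil => intro i hi; simp at hi
  | cons a h ih =>
    intro i hi
    obtain ⟨j, hj, hget, hsub⟩ := ih i hi
    refine ⟨j + 1, by simpa using Nat.succ_lt_succ hj, by simpa using hget, ?_⟩
    simpa using hsub.cons a
  | cons_cons a h ih =>
    intro i hi
    cases i with
    | zero => exact ⟨0, by simp, rfl, by simp⟩
    | succ i =>
      obtain ⟨j, hj, hget, hsub⟩ := ih i (by simpa using hi)
      refine ⟨j + 1, by simpa using Nat.succ_lt_succ hj, by simpa using hget, ?_⟩
      simpa using hsub.cons₂ a

lemma not_mem_take {α : Type*} {l : List α} (h : l.Nodup) (i : ℕ) (hi : i < l.length) :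
    l.get ⟨i, hi⟩ ∉ l.take i := by
  intro hm
  obtain ⟨j, hj, hget⟩ := List.getElem_of_mem hm
  rw [List.getElem_take] at hget
  have hj' : j < i := lt_of_lt_of_le hj (by simp [List.length_take])
  have hjl : j < l.length := hj'.trans hi
  have : j = i := by
    have := (List.Nodup.getElem_inj_iff h (hi := hjl) (hj := hi)).mp (by simpa using hget)
    exact this
  omega

end Aux
open Aux

lemma take_set_subset {n : ℕ} {l' l : List (B n)} (h : (l').Sublist l) :
    {x | x ∈ l'} ⊆ {x | x ∈ l} := fun _ hx => h.subset hx


/-- For `X ⊆ B(n)` and `E` the set of idempotents of `B(n)`, `X` is a face of the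
subsemigroup complex `H(B(n))` iff `X \ E` is a face. -/
theorem stmt13 (n : ℕ) (X : Set (B n)) :
    IsFace X ↔ IsFace (X \ ({none} ∪ {x | ∃ i : Fin n, x = some (i, i)})) := by
  classical
  show IsFace X ↔ IsFace (X \ Eset n)
  constructor
  · rintro ⟨l, hnd, hset, hchain⟩
    refine ⟨l.filter (fun x => decide (x ∉ Eset n)), hnd.sublist (List.filter_sublist (l := l)), ?_, ?_⟩
    · ext x
      simp only [Set.mem_setOf_eq, List.mem_filter, decide_eq_true_eq, Set.mem_diff]
      rw [show (x ∈ l) = (x ∈ X) from by rw [← hset]; rfl]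
    · intro i hi hmem
      obtain ⟨j, hj, hget, hsub⟩ := sublist_take (List.filter_sublist (l := l)) i hi
      refine hchain j hj ?_
      rw [hget]
      exact gen_mono (take_set_subset hsub) hmem
  · rintro ⟨l, hnd, hset, hchain⟩
    set L0 : List (B n) := (if none ∈ X then [none] else []) ++
      ((List.finRange n).filter (fun i => decide (some (i, i) ∈ X))).map
        (fun i => some (i, i)) with hL0
    have hL0E : ∀ x ∈ L0, x ∈ Eset n := by
      intro x hx
      rw [hL0, List.mem_append] at hx
      rcases hx with hx | hx
      · left
        split at hx
        · simpa using hx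
        · simp at hx
      · obtain ⟨i, _, rfl⟩ := List.mem_map.mp hx
        exact Or.inr ⟨i, rfl⟩
    have hL0X : ∀ x ∈ L0, x ∈ X := by
      intro x hx
      rw [hL0, List.mem_append] at hx
      rcases hx with hx | hx
      · split at hx
        · next h => simp at hx; subst hx; exact h
        · simp at hx
      · obtain ⟨i, hi, rfl⟩ := List.mem_map.mp hx
        exact of_decide_eq_true (List.mem_filter.mp hi).2
    have hXL0 : ∀ x ∈ X, x ∈ Eset n → x ∈ L0 := by
      rintro x hxX (hx | ⟨i, rfl⟩)
      · simp only [Set.mem_singleton_iff] at hx; subst hx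
        rw [hL0, List.mem_append]
        left; simp [hxX]
      · rw [hL0, List.mem_append]
        right
        exact List.mem_map.mpr ⟨i, List.mem_filter.mpr ⟨List.mem_finRange i, by simp [hxX]⟩, rfl⟩
    have hlmem : ∀ x, x ∈ l ↔ x ∈ X \ Eset n := by
      intro x
      rw [show (x ∈ l) = (x ∈ ({x | x ∈ l} : Set (B n))) from rfl, hset]
    have hndL0 : L0.Nodup := by
      rw [hL0]
      apply List.Nodup.append
      · split <;> simp
      · refine List.Nodup.map ?_ (List.Nodup.filter _ (List.nodup_finRange n))
        intro a b hab
        simpa using hab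
      · intro x hx hx'
        obtain ⟨i, _, rfl⟩ := List.mem_map.mp hx'
        split at hx <;> simp at hx
    refine ⟨L0 ++ l, ?_, ?_, ?_⟩
    · rw [List.nodup_append]
      refine ⟨hndL0, hnd, ?_⟩
      intro x hx y hx' hxy
      exact ((hlmem y).mp hx').2 (hxy ▸ hL0E x hx)
    · ext x
      simp only [Set.mem_setOf_eq, List.mem_append]
      constructor
      · rintro (hx | hx)
        · exact hL0X x hx
        · exact ((hlmem x).mp hx).1
      · intro hx
        by_cases hE : x ∈ Eset n
        · exact Or.inl (hXL0 x hx hE)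
        · exact Or.inr ((hlmem x).mpr ⟨hx, hE⟩)
    · intro i hi hmem
      by_cases hcase : i < L0.length
      · -- within L0
        have hget : (L0 ++ l).get ⟨i, hi⟩ = L0.get ⟨i, hcase⟩ := by
          simp only [List.get_eq_getElem]
          exact List.getElem_append_left hcase
        have htake : (L0 ++ l).take i = L0.take i := by
          rw [List.take_append, Nat.sub_eq_zero_of_le hcase.le]
          simp
        rw [hget, htake] at hmem
        have hsubE : {x | x ∈ L0.take i} ⊆ Eset n := by
          intro x hx
          exact hL0E x ((List.take_sublist i L0).subset hx)
        have hbound : L0.get ⟨i, hcase⟩ ∈ {x | x ∈ L0.take i} ∪ {none} := by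
          refine gen_le ?_ ?_ hmem
          · intro x hx y hy
            have hxE : x ∈ Eset n := by
              rcases hx with hx | hx
              · exact hsubE hx
              · rw [Set.mem_singleton_iff] at hx; subst hx; exact Or.inl rfl
            rcases absorb_left hxE y with h | h
            · rw [h]; exact hy
            · rw [h]; exact Or.inr rfl
          · exact Set.subset_union_left
        rcases hbound with hb | hb
        · exact not_mem_take hndL0 i hcase hb
        · rw [Set.mem_singleton_iff] at hb
          have hnX : (none : B n) ∈ X := hb ▸ hL0X _ (L0.get_mem _)
          have h0len : 0 < L0.length := Nat.lt_of_le_of_lt (Nat.zero_le i) hcase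
          have hget0 : L0[0]'h0len = none := by
            simp only [hL0, hnX, if_pos]
            rfl
          have hi0 : i = 0 := by
            refine (hndL0.getElem_inj_iff (hi := hcase) (hj := h0len)).mp ?_
            rw [hget0]
            exact hb
          have hempty : {x | x ∈ L0.take i} = (∅ : Set (B n)) := by
            rw [hi0]; simp
          rw [hempty, gen_empty] at hmem
          exact hmem
      · -- within l
        push_neg at hcase
        set k := i - L0.length with hk
        have hkl : k < l.length := by
          have := hi; rw [List.length_append] at this; omega
        have hget : (L0 ++ l).get ⟨i, hi⟩ = l.get ⟨k, hkl⟩ := by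
          simp only [List.get_eq_getElem]
          rw [List.getElem_append_right hcase]
        have htake : (L0 ++ l).take i = L0 ++ l.take k := by
          rw [List.take_append, List.take_of_length_le hcase]
        rw [hget, htake] at hmem
        have hsetEq : {x | x ∈ L0 ++ l.take k} = {x | x ∈ L0} ∪ {x | x ∈ l.take k} := by
          ext x; simp [List.mem_append]
        rw [hsetEq] at hmem
        have := gen_union_E (E₀ := {x | x ∈ L0}) (S := {x | x ∈ l.take k})
          (fun x hx => hL0E x hx) hmem
        have hgk : l.get ⟨k, hkl⟩ ∈ X \ Eset n := (hlmem _).mp (l.get_mem _)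
        rcases this with (h1 | h1) | h1
        · exact hchain k hkl h1
        · exact hgk.2 (hL0E _ h1)
        · rw [Set.mem_singleton_iff] at h1
          exact hgk.2 (h1 ▸ Or.inl rfl)
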